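/- Let p be an odd prime, p₂ := (p−1)/2, and let x : ℤ → 𝔽_p be the doubly infinite sequence with x(p+k) = C(p₂, k/2) for 0 ≤ k ≤ p−1 (where C(p₂, k/2) is the binomial coefficient (p₂ choose k/2) reduced mod p when k is even, and 0 when k is odd), and x(i) = 0 for all other i ∈ ℤ. Then for all natural numbers 0 ≤ j ≤ p₂ and 0 ≤ i ≤ p₂, one has, in 𝔽_p: W(x)[2j, p+2i] = C(p₂+j, i+j) · ∏_{k=0}^{j−1} C(p₂+k, i+k)² · ((k+1)·(p₂+k−i+1)^{−1})^{2(j−k)−1}, where the binomial coefficients are reduced mod p, the product is taken in 𝔽_p, and (p₂+k−i+1)^{−1} denotes the inverse in 𝔽_p (these elements are nonzero mod p). -/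

import Mathlib

open Finset Matrix

namespace BaseCaseAux


/-- guarded binomial coefficient with integer lower index -/
def bct (t : ℕ) (c : ℤ) : ℕ := if 0 ≤ c then t.choose c.toNat else 0

lemma bct_neg {t : ℕ} {c : ℤ} (h : c < 0) : bct t c = 0 := by
  simp [bct, not_le.mpr h]

lemma bct_nonneg {t : ℕ} {c : ℤ} (h : 0 ≤ c) : bct t c = t.choose c.toNat := by
  simp [bct, h]

lemma bct_coe (t k : ℕ) : bct t (k : ℤ) = t.choose k := by
  simp [bct]

/-- Vandermonde for the guarded binomial. -/
lemma bct_vandermonde (m s : ℕ) (c : ℤ) :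
    bct (m + s) c = ∑ k ∈ range (s + 1), s.choose k * bct m (c - k) := by
  rcases lt_or_ge c 0 with hc | hc
  · rw [bct_neg hc]
    refine (Finset.sum_eq_zero fun k _ => ?_).symm
    rw [bct_neg (by omega : c - (k:ℤ) < 0), mul_zero]
  · set C := c.toNat with hC
    have hcC : c = (C : ℤ) := by omega
    rw [bct_nonneg hc]
    have h1 : (m + s).choose C = ∑ k ∈ range (C + 1), s.choose k * m.choose (C - k) := by
      rw [add_comm m s, Nat.add_choose_eq]
      rw [Finset.Nat.sum_antidiagonal_eq_sum_range_succ_mk]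
    rw [h1]
    -- both sides equal the sum over range (C + s + 2)
    have h2 : ∑ k ∈ range (C + 1), s.choose k * m.choose (C - k)
        = ∑ k ∈ range (C + s + 2), s.choose k * bct m (c - k) := by
      have e1 : ∑ k ∈ range (C + 1), s.choose k * bct m (c - k)
          = ∑ k ∈ range (C + s + 2), s.choose k * bct m (c - k) :=
        Finset.sum_subset (Finset.range_subset_range.mpr (by omega : C + 1 ≤ C + s + 2))
          (fun k _ hk => by
            have : C < k := by simp [Finset.mem_range] at hk; omega
            rw [bct_neg (by omega : c - (k:ℤ) < 0), mul_zero])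
      rw [← e1]
      refine Finset.sum_congr rfl fun k hk => ?_
      have hk' : k ≤ C := by simp [Finset.mem_range] at hk; omega
      congr 1
      rw [bct_nonneg (by omega : (0:ℤ) ≤ c - k)]
      congr 1
      omega
    have h3 : ∑ k ∈ range (s + 1), s.choose k * bct m (c - k)
        = ∑ k ∈ range (C + s + 2), s.choose k * bct m (c - k) := by
      rw [Finset.sum_subset (Finset.range_subset_range.mpr (by omega : s + 1 ≤ C + s + 2))]
      intro k _ hk
      have hks : s < k := by simp [Finset.mem_range] at hk ⊢; omega
      rw [Nat.choose_eq_zero_of_lt hks, zero_mul]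
    rw [h2, h3]


section FieldStuff
variable {K : Type*} [Field K]

variable {K : Type*} [Field K]

/-- factorial casts are nonzero under a unit hypothesis -/
lemma fact_ne {B : ℕ} (hnz : ∀ t : ℕ, 0 < t → t ≤ B → ((t : ℕ) : K) ≠ 0) :
    ∀ t : ℕ, t ≤ B → ((t.factorial : ℕ) : K) ≠ 0 := by
  intro t
  induction t with
  | zero => intro _; simp
  | succ t ih =>
    intro ht
    rw [Nat.factorial_succ, Nat.cast_mul]
    exact mul_ne_zero (hnz (t+1) (by omega) ht) (ih (by omega))

lemma choose_ne {B : ℕ} (hnz : ∀ t : ℕ, 0 < t → t ≤ B → ((t : ℕ) : K) ≠ 0)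
    {s k : ℕ} (hk : k ≤ s) (hs : s ≤ B) : ((s.choose k : ℕ) : K) ≠ 0 := by
  intro h
  have h1 := Nat.choose_mul_factorial_mul_factorial hk
  have h2 : ((k.factorial * (s - k).factorial * s.choose k : ℕ) : K) = ((s.factorial : ℕ) : K) := by
    rw [← h1]; push_cast; ring
  rw [Nat.cast_mul, Nat.cast_mul, h, mul_zero] at h2
  exact fact_ne hnz s hs h2.symm

/-- cast of a binomial coefficient as a ratio of factorials, subtraction-free form -/
lemma choose_cast {B : ℕ} (hnz : ∀ t : ℕ, 0 < t → t ≤ B → ((t : ℕ) : K) ≠ 0)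
    {x y : ℕ} (hxy : x + y ≤ B) :
    (((x + y).choose x : ℕ) : K)
      = (((x + y).factorial : ℕ) : K) * (((x.factorial : ℕ) : K) * ((y.factorial : ℕ) : K))⁻¹ := by
  have h1 := Nat.choose_mul_factorial_mul_factorial (Nat.le_add_right x y)
  have h2 : x + y - x = y := by omega
  rw [h2] at h1
  have hx : ((x.factorial : ℕ) : K) ≠ 0 := fact_ne hnz x (by omega)
  have hy : ((y.factorial : ℕ) : K) ≠ 0 := fact_ne hnz y (by omega)
  have h3 : (((x+y).choose x : ℕ) : K) * (((x.factorial : ℕ) : K) * ((y.factorial : ℕ) : K))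
      = (((x + y).factorial : ℕ) : K) := by
    have := congrArg (fun t : ℕ => ((t : ℕ) : K)) h1
    push_cast at this ⊢
    linear_combination this
  field_simp
  linear_combination h3

/-- ∏_{a<n} (x+1+a) = (x+n)!/x!  (multiplied form) -/
lemma prod_shift_fact (x n : ℕ) :
    ((x.factorial : ℕ) : K) * ∏ a ∈ range n, ((x + 1 + a : ℕ) : K)
      = (((x + n).factorial : ℕ) : K) := by
  induction n with
  | zero => simp
  | succ n ih =>
    rw [Finset.prod_range_succ, ← mul_assoc, ih]
    have : (x + (n+1)).factorial = (x + n).factorial * (x + 1 + n) := by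
      have h : x + (n + 1) = (x + n) + 1 := by omega
      rw [h, Nat.factorial_succ]; ring
    rw [this]; push_cast; ring

lemma prod_shift_fact' {B x : ℕ} (n : ℕ) (hnz : ∀ t : ℕ, 0 < t → t ≤ B → ((t : ℕ) : K) ≠ 0)
    (hx : x ≤ B) :
    ∏ a ∈ range n, ((x + 1 + a : ℕ) : K)
      = (((x + n).factorial : ℕ) : K) * (((x.factorial : ℕ) : K))⁻¹ := by
  have hfx : ((x.factorial : ℕ) : K) ≠ 0 := fact_ne hnz x hx
  rw [eq_mul_inv_iff_mul_eq₀ hfx]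
  linear_combination prod_shift_fact (K := K) x n

/-- reflected product -/
lemma prod_reflect_cast (y n : ℕ) :
    ∏ a ∈ range n, ((y + n - a : ℕ) : K) = ∏ a ∈ range n, ((y + 1 + a : ℕ) : K) := by
  rw [← Finset.prod_range_reflect (fun a => ((y + 1 + a : ℕ) : K)) n]
  refine Finset.prod_congr rfl fun a ha => ?_
  have ha' : a < n := Finset.mem_range.mp ha
  congr 1
  omega

/-- the core algebraic identity for the elimination entry -/
lemma key_alg (C1 C2 C3 u v B cc T : K) (hu : u = cc + B + 1)
    (hu0 : u ≠ 0) (hT0 : T + 1 ≠ 0) (hcc : cc + 1 ≠ 0)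
    (h1 : C2 * (cc + 1) = C1 * v)
    (h2 : (T + 1) * C1 = C3 * (cc + 1)) :
    C2 - v * u⁻¹ * C1 = v * u⁻¹ * (B * (T + 1)⁻¹) * C3 := by
  have h3 : (T+1) * C2 * (cc+1) = v * C3 * (cc+1) := by linear_combination (T+1)*h1 + v*h2
  have h4 : (T+1) * C2 = v * C3 := mul_right_cancel₀ hcc h3
  subst hu
  field_simp
  linear_combination (cc+B+1)*h4 - v*h2


variable {K : Type*} [Field K]

lemma entry_key {m n i : ℕ} (him : i ≤ m) (a b : ℕ) (ha : a < n) (hb : b < n)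
    (hnz : ∀ t : ℕ, 0 < t → t ≤ m + n → ((t : ℕ) : K) ≠ 0) :
    ((bct (m + (n - 1 - b)) ((i:ℤ) + (a+1) - (b+1)) : ℕ) : K)
      - ((m + n - (i+a) : ℕ) : K) * (((i+a+1 : ℕ) : K))⁻¹
          * ((bct (m + (n-1-b)) ((i:ℤ) + a - (b+1)) : ℕ) : K)
    = ((m + n - (i+a) : ℕ) : K) * (((i+a+1 : ℕ) : K))⁻¹
        * (((b+1 : ℕ) : K) * (((m+n-b : ℕ) : K))⁻¹)
        * ((bct (m + 1 + (n-1-b)) ((i:ℤ) + a - b) : ℕ) : K) := by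
  set T : ℕ := m + (n - 1 - b) with hT
  have hT1 : m + n - b = T + 1 := by omega
  have hT2 : m + 1 + (n - 1 - b) = T + 1 := by omega
  have hgT : ((m + n - b : ℕ) : K) = (T : K) + 1 := by rw [hT1]; push_cast; ring
  rw [hT2, hgT]
  rcases lt_trichotomy (i + a) b with hc | hc | hc
  · -- all entries vanish
    rw [bct_neg (by push_cast; omega : (i:ℤ) + (a+1) - (b+1) < 0),
        bct_neg (by push_cast; omega : (i:ℤ) + a - (b+1) < 0),
        bct_neg (by push_cast; omega : (i:ℤ) + a - b < 0)]
    push_cast; ring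
  · -- boundary case i + a = b
    have e1 : (i:ℤ) + (a+1) - (b+1) = ((0 : ℕ) : ℤ) := by push_cast; omega
    have e2 : (i:ℤ) + a - (b+1) < 0 := by push_cast; omega
    have e3 : (i:ℤ) + a - b = ((0 : ℕ) : ℤ) := by push_cast; omega
    rw [e1, e3, bct_neg e2, bct_coe, bct_coe, Nat.choose_zero_right, Nat.choose_zero_right]
    have hv : m + n - (i + a) = T + 1 := by omega
    have hu : i + a + 1 = b + 1 := by omega
    rw [hv, hu]
    have h1 : ((T + 1 : ℕ) : K) ≠ 0 := hnz (T+1) (by omega) (by omega)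
    have h2 : ((b + 1 : ℕ) : K) ≠ 0 := hnz (b+1) (by omega) (by omega)
    have hgT' : ((T + 1 : ℕ) : K) = (T : K) + 1 := by push_cast; ring
    rw [hgT'] at h1 ⊢
    have h2' : ((b:K) + 1) ≠ 0 := by push_cast at h2; exact h2
    field_simp
    simp
  · -- main case b < i + a
    set cc : ℕ := i + a - b - 1 with hcc
    have e1 : (i:ℤ) + (a+1) - (b+1) = ((cc + 1 : ℕ) : ℤ) := by push_cast; omega
    have e2 : (i:ℤ) + a - (b+1) = ((cc : ℕ) : ℤ) := by push_cast; omega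
    have e3 : (i:ℤ) + a - b = ((cc + 1 : ℕ) : ℤ) := by push_cast; omega
    rw [e1, e2, e3, bct_coe, bct_coe, bct_coe]
    have hTcc : T - cc = m + n - (i + a) := by omega
    have h1n := Nat.choose_succ_right_eq T cc
    rw [hTcc] at h1n
    have h2n := Nat.add_one_mul_choose_eq T cc
    have h1 : ((T.choose (cc+1) : ℕ) : K) * ((cc : K) + 1)
        = ((T.choose cc : ℕ) : K) * ((m + n - (i+a) : ℕ) : K) := by
      have := congrArg (fun t : ℕ => ((t : ℕ) : K)) h1n
      push_cast at this; push_cast; linear_combination this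
    have h2 : ((T : K) + 1) * ((T.choose cc : ℕ) : K)
        = (((T+1).choose (cc+1) : ℕ) : K) * ((cc : K) + 1) := by
      have := congrArg (fun t : ℕ => ((t : ℕ) : K)) h2n
      push_cast at this; push_cast; linear_combination this
    have hu : ((i + a + 1 : ℕ) : K) = (cc : K) + ((b+1 : ℕ) : K) + 1 := by
      have : (i + a + 1 : ℕ) = cc + (b + 1) + 1 := by omega
      rw [this]; push_cast; ring
    have hu0 : ((i + a + 1 : ℕ) : K) ≠ 0 := hnz _ (by omega) (by omega)
    have hT0 : (T : K) + 1 ≠ 0 := by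
      have := hnz (T+1) (by omega) (by omega); push_cast at this; exact this
    have hcc0 : (cc : K) + 1 ≠ 0 := by
      have := hnz (cc+1) (by omega) (by omega); push_cast at this; exact this
    exact key_alg _ _ _ _ _ _ _ _ hu hu0 hT0 hcc0 h1 h2


/-- the Toeplitz-with-varying-top matrix -/

noncomputable def NM (K : Type*) [Field K] (m n i : ℕ) : Matrix (Fin n) (Fin n) K :=
  Matrix.of fun a b => ((bct (m + (n - 1 - (b:ℕ))) ((i:ℤ) + (a:ℕ) - (b:ℕ)) : ℕ) : K)

lemma step7 (i m n : ℕ) (him : i ≤ m)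
    (hnz : ∀ t : ℕ, 0 < t → t ≤ m + n → ((t : ℕ) : K) ≠ 0) :
    (((m+n).choose i : ℕ) : K) *
      ((∏ a ∈ range n, ((m + n - (i+a) : ℕ) : K) * (((i+a+1 : ℕ) : K))⁻¹) *
       ((∏ b ∈ range n, ((b+1 : ℕ) : K) * (((m+n-b : ℕ) : K))⁻¹) *
        (∏ t ∈ range n, (((m+1+t).choose i : ℕ) : K) * ((((i+t).choose i : ℕ) : K))⁻¹)))
    = ∏ t ∈ range (n+1), (((m+t).choose i : ℕ) : K) * ((((i+t).choose i : ℕ) : K))⁻¹ := by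
  obtain ⟨d, rfl⟩ : ∃ d, m = i + d := ⟨m - i, by omega⟩
  -- split and evaluate all the scalar products
  simp only [Finset.prod_mul_distrib, Finset.prod_inv_distrib]
  have hP1 : (∏ a ∈ range n, ((i + d + n - (i+a) : ℕ) : K))
      = (((d + n).factorial : ℕ) : K) * (((d.factorial : ℕ) : K))⁻¹ := by
    rw [show (fun a => ((i + d + n - (i+a) : ℕ) : K)) = fun a => ((d + n - a : ℕ) : K) by
      funext a; congr 1; omega]
    rw [prod_reflect_cast d n]
    exact prod_shift_fact' n hnz (by omega)
  have hP2 : (∏ a ∈ range n, ((i + a + 1 : ℕ) : K))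
      = (((i + n).factorial : ℕ) : K) * (((i.factorial : ℕ) : K))⁻¹ := by
    rw [show (fun a => ((i + a + 1 : ℕ) : K)) = fun a => ((i + 1 + a : ℕ) : K) by
      funext a; congr 1; omega]
    exact prod_shift_fact' n hnz (by omega)
  have hP3 : (∏ b ∈ range n, ((b + 1 : ℕ) : K))
      = ((n.factorial : ℕ) : K) := by
    have := prod_shift_fact' (K := K) (B := i + d + n) (x := 0) n hnz (by omega)
    simp only [Nat.zero_add, Nat.factorial_zero] at this
    rw [show (fun b => ((b + 1 : ℕ) : K)) = fun b => ((0 + 1 + b : ℕ) : K) by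
      funext b; congr 1; omega]
    rw [this]; simp
  have hP4 : (∏ b ∈ range n, ((i + d + n - b : ℕ) : K))
      = (((i + d + n).factorial : ℕ) : K) * ((((i+d).factorial : ℕ) : K))⁻¹ := by
    rw [prod_reflect_cast (i+d) n]
    exact prod_shift_fact' n hnz (by omega)
  have hPm : (∏ t ∈ range (n+1), (((i + d + t).choose i : ℕ) : K))
      = (∏ t ∈ range n, (((i + d + 1 + t).choose i : ℕ) : K)) * (((i+d).choose i : ℕ) : K) := by
    rw [Finset.prod_range_succ']
    congr 1
    refine Finset.prod_congr rfl fun t _ => ?_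
    rw [show i + d + (t + 1) = i + d + 1 + t from by omega]
  have hPi : (∏ t ∈ range (n+1), (((i + t).choose i : ℕ) : K))
      = (∏ t ∈ range n, (((i + t).choose i : ℕ) : K)) * (((i+n).choose i : ℕ) : K) := by
    rw [Finset.prod_range_succ]
  rw [hP1, hP2, hP3, hP4, hPm, hPi]
  -- choose values as factorials
  have hc1 : (((i + d + n).choose i : ℕ) : K)
      = ((((i+d+n).factorial : ℕ)) : K) * (((i.factorial : ℕ) : K) * (((d+n).factorial : ℕ) : K))⁻¹ := by
    rw [show i + d + n = i + (d + n) by ring] at *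
    exact choose_cast hnz (by omega)
  have hc2 : (((i + d).choose i : ℕ) : K)
      = ((((i+d).factorial : ℕ)) : K) * (((i.factorial : ℕ) : K) * ((d.factorial : ℕ) : K))⁻¹ :=
    choose_cast hnz (by omega)
  have hc3 : (((i + n).choose i : ℕ) : K)
      = ((((i+n).factorial : ℕ)) : K) * (((i.factorial : ℕ) : K) * ((n.factorial : ℕ) : K))⁻¹ :=
    choose_cast hnz (by omega)
  rw [hc1, hc2, hc3]
  -- nonzero facts
  have hfi : ((i.factorial : ℕ) : K) ≠ 0 := fact_ne hnz i (by omega)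
  have hfd : ((d.factorial : ℕ) : K) ≠ 0 := fact_ne hnz d (by omega)
  have hfn : ((n.factorial : ℕ) : K) ≠ 0 := fact_ne hnz n (by omega)
  have hfin : (((i+n).factorial : ℕ) : K) ≠ 0 := fact_ne hnz (i+n) (by omega)
  have hfdn : (((d+n).factorial : ℕ) : K) ≠ 0 := fact_ne hnz (d+n) (by omega)
  have hfidn : (((i+d+n).factorial : ℕ) : K) ≠ 0 := fact_ne hnz (i+d+n) (by omega)
  have hfid : (((i+d).factorial : ℕ) : K) ≠ 0 := fact_ne hnz (i+d) (by omega)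
  have hPmne : (∏ t ∈ range n, (((i + d + 1 + t).choose i : ℕ) : K)) ≠ 0 := by
    refine Finset.prod_ne_zero_iff.mpr fun t ht => ?_
    have ht' : t < n := Finset.mem_range.mp ht
    exact choose_ne hnz (by omega) (by omega)
  have hPine : (∏ t ∈ range n, (((i + t).choose i : ℕ) : K)) ≠ 0 := by
    refine Finset.prod_ne_zero_iff.mpr fun t ht => ?_
    have ht' : t < n := Finset.mem_range.mp ht
    exact choose_ne hnz (by omega) (by omega)
  field_simp

lemma det_NM (i : ℕ) : ∀ n m : ℕ, i ≤ m →
    (∀ t : ℕ, 0 < t → t < m + n → ((t : ℕ) : K) ≠ 0) →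
    (NM K m n i).det
      = ∏ t ∈ range n, (((m+t).choose i : ℕ) : K) * ((((i+t).choose i : ℕ) : K))⁻¹ := by
  intro n
  induction n with
  | zero => intro m _ _; simp [NM]
  | succ n IH =>
    intro m him hnz
    have hnz' : ∀ t : ℕ, 0 < t → t ≤ m + n → ((t : ℕ) : K) ≠ 0 := fun t h1 h2 =>
      hnz t h1 (by omega)
    set μ : Fin n → K := fun a =>
      ((m + n - (i + (a:ℕ)) : ℕ) : K) * (((i + (a:ℕ) + 1 : ℕ) : K))⁻¹ with hμ
    set γ : Fin n → K := fun b =>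
      (((b:ℕ) + 1 : ℕ) : K) * (((m + n - (b:ℕ) : ℕ) : K))⁻¹ with hγ
    set N := NM K m (n+1) i with hN
    set inner : Matrix (Fin n) (Fin n) K :=
      Matrix.of (fun a b : Fin n => γ b * NM K (m+1) n i a b) with hinner
    set N' : Matrix (Fin (n+1)) (Fin (n+1)) K :=
      Matrix.of (fun a b => Fin.cases (N 0 b) (fun a' => N a'.succ b - μ a' * N a'.castSucc b) a)
      with hN'
    have hdet1 : N.det = N'.det := by
      refine Matrix.det_eq_of_forall_row_eq_smul_add_pred μ (fun j => ?_) (fun a j => ?_)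
      · simp [hN']
      · simp only [hN', Matrix.of_apply, Fin.cases_succ]
        ring
    -- entries of the first column of N'
    have hcol : ∀ b : Fin (n+1), b ≠ 0 → N' b 0 = 0 := by
      intro b hb
      rcases Fin.eq_zero_or_eq_succ b with rfl | ⟨a', rfl⟩
      · exact absurd rfl hb
      · simp only [hN', Matrix.of_apply, Fin.cases_succ]
        have hent : ∀ r : Fin (n+1), N r 0 = (((m+n).choose (i + (r:ℕ)) : ℕ) : K) := by
          intro r
          show ((bct (m + (n + 1 - 1 - ((0 : Fin (n+1)):ℕ))) ((i:ℤ) + (r:ℕ) - ((0 : Fin (n+1)):ℕ)) : ℕ) : K) = _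
          have h1 : m + (n + 1 - 1 - ((0 : Fin (n+1)):ℕ)) = m + n := by simp
          have h2 : (i:ℤ) + (r:ℕ) - ((0 : Fin (n+1)):ℕ) = ((i + (r:ℕ) : ℕ) : ℤ) := by
            push_cast [Fin.val_zero]; ring
          rw [h1, h2, bct_coe]
        rw [hent, hent, Fin.val_succ, Fin.coe_castSucc]
        have hkey := Nat.choose_succ_right_eq (m+n) (i + (a':ℕ))
        have hu0 : ((i + (a':ℕ) + 1 : ℕ) : K) ≠ 0 := hnz _ (by omega) (by omega)
        have hkeyK : (((m+n).choose (i + (a':ℕ) + 1) : ℕ) : K) * ((i + (a':ℕ) + 1 : ℕ) : K)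
            = (((m+n).choose (i + (a':ℕ)) : ℕ) : K) * ((m + n - (i + (a':ℕ)) : ℕ) : K) := by
          have := congrArg (fun t : ℕ => ((t : ℕ) : K)) hkey
          push_cast at this ⊢
          linear_combination this
        simp only [hμ]
        have h3 : i + ((a':ℕ) + 1) = i + (a':ℕ) + 1 := by omega
        rw [h3]
        have hu0' : ((i:K) + ((a':ℕ):K) + 1) ≠ 0 := by push_cast at hu0; exact hu0
        push_cast at hkeyK ⊢
        field_simp [hu0']
        linear_combination hkeyK
    -- the minor is a scaled copy of NM (m+1) n i
    have hmin : N'.submatrix Fin.succ Fin.succ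
        = Matrix.of (fun a b : Fin n => μ a * inner a b) := by
      ext a b
      simp only [Matrix.submatrix_apply, hN', hinner, Matrix.of_apply, Fin.cases_succ]
      have hb' : (b.succ : ℕ) = (b:ℕ) + 1 := rfl
      have ha' : (a.succ : ℕ) = (a:ℕ) + 1 := rfl
      have hac : ((Fin.castSucc a : Fin (n+1)) : ℕ) = (a:ℕ) := rfl
      show ((bct (m + (n + 1 - 1 - ((b.succ : Fin (n+1)):ℕ))) ((i:ℤ) + ((a.succ : Fin (n+1)):ℕ) - ((b.succ : Fin (n+1)):ℕ)) : ℕ) : K)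
          - μ a * ((bct (m + (n + 1 - 1 - ((b.succ : Fin (n+1)):ℕ))) ((i:ℤ) + ((Fin.castSucc a : Fin (n+1)):ℕ) - ((b.succ : Fin (n+1)):ℕ)) : ℕ) : K)
          = μ a * (γ b * ((bct (m + 1 + (n - 1 - (b:ℕ))) ((i:ℤ) + (a:ℕ) - (b:ℕ)) : ℕ) : K))
      rw [hb', ha', hac]
      have hidx : n + 1 - 1 - ((b:ℕ) + 1) = n - 1 - (b:ℕ) := by omega
      rw [hidx]
      have e1 : (i:ℤ) + ((a:ℕ) + 1) - ((b:ℕ) + 1) = (i:ℤ) + ((a:ℕ)+1) - ((b:ℕ)+1) := rfl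
      have ek := entry_key (K := K) him (a:ℕ) (b:ℕ) a.isLt b.isLt hnz'
      simp only [hμ, hγ]
      push_cast at ek ⊢
      linear_combination ek
    -- expand along the first column
    rw [hdet1, Matrix.det_succ_column_zero]
    rw [Finset.sum_eq_single 0]
    rotate_left
    · intro b _ hb
      rw [hcol b hb]
      ring
    · intro h; exact absurd (Finset.mem_univ 0) h
    rw [Fin.succAbove_zero, hmin]
    have h00 : N' 0 0 = (((m+n).choose i : ℕ) : K) := by
      simp only [hN', Matrix.of_apply, Fin.cases_zero]
      show ((bct (m + (n + 1 - 1 - ((0 : Fin (n+1)):ℕ))) ((i:ℤ) + ((0 : Fin (n+1)):ℕ) - ((0 : Fin (n+1)):ℕ)) : ℕ) : K) = _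
      have h1 : m + (n + 1 - 1 - ((0 : Fin (n+1)):ℕ)) = m + n := by simp
      have h2 : (i:ℤ) + ((0 : Fin (n+1)):ℕ) - ((0 : Fin (n+1)):ℕ) = ((i : ℕ) : ℤ) := by push_cast; ring
      rw [h1, h2, bct_coe]
    rw [h00, Matrix.det_mul_column μ, hinner, Matrix.det_mul_row γ]
    rw [IH (m+1) (by omega) (fun t h1 h2 => hnz t h1 (by omega))]
    have hfin : (∏ a : Fin n, μ a) = ∏ a ∈ range n,
        ((m + n - (i+a) : ℕ) : K) * (((i+a+1 : ℕ) : K))⁻¹ := by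
      exact Fin.prod_univ_eq_prod_range
        (fun k : ℕ => ((m + n - (i+k) : ℕ) : K) * (((i+k+1 : ℕ) : K))⁻¹) n
    have hfin2 : (∏ b : Fin n, γ b) = ∏ b ∈ range n,
        ((b+1 : ℕ) : K) * (((m+n-b : ℕ) : K))⁻¹ := by
      exact Fin.prod_univ_eq_prod_range
        (fun k : ℕ => ((k+1 : ℕ) : K) * (((m+n-k : ℕ) : K))⁻¹) n
    rw [hfin, hfin2]
    have hs7 := step7 (K := K) i m n him hnz'
    simp only [Fin.val_zero, pow_zero, one_mul]
    calc (((m+n).choose i : ℕ) : K) *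
        ((∏ a ∈ range n, ((m + n - (i+a) : ℕ) : K) * (((i+a+1 : ℕ) : K))⁻¹) *
         ((∏ b ∈ range n, ((b+1 : ℕ) : K) * (((m+n-b : ℕ) : K))⁻¹) *
          (∏ t ∈ range n, (((m+1+t).choose i : ℕ) : K) * ((((i+t).choose i : ℕ) : K))⁻¹)))
        = ∏ t ∈ range (n+1), (((m+t).choose i : ℕ) : K) * ((((i+t).choose i : ℕ) : K))⁻¹ := hs7
      _ = _ := rfl

noncomputable def AM (K : Type*) [Field K] (m n i : ℕ) : Matrix (Fin n) (Fin n) K :=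
  Matrix.of fun a b => ((bct m ((i:ℤ) + (a:ℕ) - (b:ℕ)) : ℕ) : K)

lemma det_AM_eq (m n i : ℕ) : (AM K m n i).det = (NM K m n i).det := by
  classical
  set U : Matrix (Fin n) (Fin n) K :=
    Matrix.of fun t b => if (b:ℕ) ≤ (t:ℕ) then
      (((n - 1 - (b:ℕ)).choose ((t:ℕ) - (b:ℕ)) : ℕ) : K) else 0 with hU
  have hUtri : U.BlockTriangular OrderDual.toDual := by
    intro r c h
    have hrc : r < c := by simpa using h
    simp only [hU, Matrix.of_apply]
    rw [if_neg (by omega : ¬ ((c:ℕ) ≤ (r:ℕ)))]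
  have hUdet : U.det = 1 := by
    rw [Matrix.det_of_lowerTriangular U hUtri]
    refine Finset.prod_eq_one fun t _ => ?_
    simp [hU]
  have hAU : NM K m n i = AM K m n i * U := by
    ext a b
    rw [Matrix.mul_apply]
    have hstep : ∀ t : Fin n, AM K m n i a t * U t b
        = (fun k : ℕ => ((bct m ((i:ℤ) + (a:ℕ) - k) : ℕ) : K) *
            (if (b:ℕ) ≤ k then (((n - 1 - (b:ℕ)).choose (k - (b:ℕ)) : ℕ) : K) else 0)) (t:ℕ) :=
      fun t => rfl
    rw [Finset.sum_congr rfl fun t _ => hstep t]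
    rw [Fin.sum_univ_eq_sum_range (fun k : ℕ => ((bct m ((i:ℤ) + (a:ℕ) - k) : ℕ) : K) *
      (if (b:ℕ) ≤ k then (((n - 1 - (b:ℕ)).choose (k - (b:ℕ)) : ℕ) : K) else 0)) n]
    have hbn : (b:ℕ) < n := b.isLt
    -- restrict to Ico b n
    have h1 : ∑ k ∈ range n, ((bct m ((i:ℤ) + (a:ℕ) - k) : ℕ) : K) *
        (if (b:ℕ) ≤ k then (((n - 1 - (b:ℕ)).choose (k - (b:ℕ)) : ℕ) : K) else 0)
        = ∑ k ∈ Finset.Ico (b:ℕ) n, ((bct m ((i:ℤ) + (a:ℕ) - k) : ℕ) : K) *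
            (((n - 1 - (b:ℕ)).choose (k - (b:ℕ)) : ℕ) : K) := by
      rw [← Finset.sum_subset (fun k hk => Finset.mem_range.mpr (Finset.mem_Ico.mp hk).2)
        (fun k hk hk2 => ?_)]
      · refine Finset.sum_congr rfl fun k hk => ?_
        rw [if_pos (Finset.mem_Ico.mp hk).1]
      · have : ¬ ((b:ℕ) ≤ k) := fun h => hk2 (Finset.mem_Ico.mpr ⟨h, Finset.mem_range.mp hk⟩)
        rw [if_neg this, mul_zero]
    rw [h1, Finset.sum_Ico_eq_sum_range]
    have h2 : ∑ k ∈ range (n - (b:ℕ)), ((bct m ((i:ℤ) + (a:ℕ) - (((b:ℕ) + k : ℕ) : ℤ)) : ℕ) : K) *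
        (((n - 1 - (b:ℕ)).choose (((b:ℕ) + k) - (b:ℕ)) : ℕ) : K)
        = ∑ k ∈ range ((n - 1 - (b:ℕ)) + 1),
            (((n - 1 - (b:ℕ)).choose k * bct m (((i:ℤ) + (a:ℕ) - (b:ℕ)) - k) : ℕ) : K) := by
      rw [show n - (b:ℕ) = (n - 1 - (b:ℕ)) + 1 by omega]
      refine Finset.sum_congr rfl fun k _ => ?_
      have e1 : ((b:ℕ) + k) - (b:ℕ) = k := by omega
      have e2 : (i:ℤ) + (a:ℕ) - (((b:ℕ) + k : ℕ) : ℤ) = ((i:ℤ) + (a:ℕ) - (b:ℕ)) - k := by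
        push_cast; ring
      rw [e1, e2]
      push_cast
      ring
    rw [h2, ← Nat.cast_sum, ← bct_vandermonde m (n - 1 - (b:ℕ)) ((i:ℤ) + (a:ℕ) - (b:ℕ))]
    rfl
  rw [hAU, Matrix.det_mul, hUdet, mul_one]


lemma det_AM_val {K : Type*} [Field K] (i m n : ℕ) (him : i ≤ m)
    (hnz : ∀ t : ℕ, 0 < t → t < m + n → ((t : ℕ) : K) ≠ 0) :
    (AM K m n i).det = ∏ t ∈ range n, (((m+t).choose i : ℕ) : K) * ((((i+t).choose i : ℕ) : K))⁻¹ := by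
  rw [det_AM_eq]
  exact det_NM i n m him hnz
lemma ff_alg (s1 s2 s3 s4 fI fD fJ fIJ fDJ fIDJ C1 C2 C3 C4 C5 C6 : K)
    (h1 : C1 = s1 * fIDJ * (fI * (s2 * fDJ))⁻¹) (h2 : C2 = fIDJ * (fI * fDJ)⁻¹)
    (h3 : C3 = s3 * fIJ * (fI * (s4 * fJ))⁻¹) (h4 : C4 = fIJ * (fI * fJ)⁻¹)
    (h5 : C5 = s1 * fIDJ * ((s3 * fIJ) * fD)⁻¹) (h6 : C6 = fIDJ * (fIJ * fD)⁻¹)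
    (nI : fI ≠ 0) (nD : fD ≠ 0) (nJ : fJ ≠ 0) (nIJ : fIJ ≠ 0) (nDJ : fDJ ≠ 0)
    (n2 : s2 ≠ 0) (n3 : s3 ≠ 0) (n4 : s4 ≠ 0) :
    C1 * C2 * s2 * fDJ^2 = C5 * C6 * s4 * (fJ * fD)^2 * (C3 * C4) := by
  subst h1 h2 h3 h4 h5 h6
  field_simp

lemma div_alg (C1 C2 C3 C4 C5 C6 s2 s4 fJ fD fDJ : K)
    (h : C1 * C2 * s2 * fDJ^2 = C5 * C6 * s4 * (fJ * fD)^2 * (C3 * C4))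
    (h3 : C3 ≠ 0) (h4 : C4 ≠ 0) (hs2 : s2 ≠ 0) (hDJ : fDJ ≠ 0) :
    C1 * C3⁻¹ * (C2 * C4⁻¹) = C5 * C6 * (s4 * s2⁻¹) * (fJ * fD * fDJ⁻¹)^2 := by
  field_simp
  linear_combination h

lemma final_step (i d j : ℕ) (hj : j + 1 ≤ i + d)
    (hnz : ∀ t : ℕ, 0 < t → t ≤ (i + d) + (i + d) → ((t : ℕ) : K) ≠ 0) :
    ((((i+d)+(j+1)).choose i : ℕ) : K) * ((((i+(j+1)).choose i : ℕ) : K))⁻¹ *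
      (((((i+d)+j).choose i : ℕ) : K) * ((((i+j).choose i : ℕ) : K))⁻¹)
    = ((((i+d)+(j+1)).choose (i+(j+1)) : ℕ) : K) * ((((i+d)+j).choose (i+j) : ℕ) : K) *
        (((j+1 : ℕ) : K) * (((d+j+1 : ℕ) : K))⁻¹) *
        (((j.factorial : ℕ) : K) * ((d.factorial : ℕ) : K) * ((((d+j).factorial : ℕ) : K))⁻¹)^2 := by
  have h1 : ((((i+d)+(j+1)).choose i : ℕ) : K)
      = ((i+d+j+1 : ℕ) : K) * (((i+d+j).factorial : ℕ) : K) *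
        (((i.factorial : ℕ) : K) * (((d+j+1 : ℕ) : K) * (((d+j).factorial : ℕ) : K)))⁻¹ := by
    rw [show (i+d)+(j+1) = i + (d+j+1) by ring]
    rw [choose_cast (x := i) (y := d+j+1) hnz (by omega)]
    rw [show i+(d+j+1) = (i+d+j)+1 by ring, Nat.factorial_succ (i+d+j), Nat.factorial_succ (d+j)]
    push_cast
    try ring
  have h2 : ((((i+d)+j).choose i : ℕ) : K)
      = (((i+d+j).factorial : ℕ) : K) *
        (((i.factorial : ℕ) : K) * (((d+j).factorial : ℕ) : K))⁻¹ := by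
    rw [show (i+d)+j = i + (d+j) by ring]
    rw [choose_cast (x := i) (y := d+j) hnz (by omega)]
  have h3 : (((i+(j+1)).choose i : ℕ) : K)
      = ((i+j+1 : ℕ) : K) * (((i+j).factorial : ℕ) : K) *
        (((i.factorial : ℕ) : K) * (((j+1 : ℕ) : K) * ((j.factorial : ℕ) : K)))⁻¹ := by
    rw [choose_cast (x := i) (y := j+1) hnz (by omega)]
    rw [show i+(j+1) = (i+j)+1 by ring, Nat.factorial_succ (i+j), Nat.factorial_succ j]
    push_cast
    try ring
  have h4 : (((i+j).choose i : ℕ) : K)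
      = (((i+j).factorial : ℕ) : K) *
        (((i.factorial : ℕ) : K) * ((j.factorial : ℕ) : K))⁻¹ :=
    choose_cast (x := i) (y := j) hnz (by omega)
  have h5 : ((((i+d)+(j+1)).choose (i+(j+1)) : ℕ) : K)
      = ((i+d+j+1 : ℕ) : K) * (((i+d+j).factorial : ℕ) : K) *
        ((((i+j+1 : ℕ) : K) * (((i+j).factorial : ℕ) : K)) * ((d.factorial : ℕ) : K))⁻¹ := by
    rw [show (i+d)+(j+1) = (i+j+1) + d by ring, show i+(j+1) = i+j+1 by ring]
    rw [choose_cast (x := i+j+1) (y := d) hnz (by omega)]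
    rw [show i+j+1+d = (i+d+j)+1 by ring, Nat.factorial_succ (i+d+j), Nat.factorial_succ (i+j)]
    push_cast
    try ring
  have h6 : ((((i+d)+j).choose (i+j) : ℕ) : K)
      = (((i+d+j).factorial : ℕ) : K) *
        ((((i+j).factorial : ℕ) : K) * ((d.factorial : ℕ) : K))⁻¹ := by
    rw [show (i+d)+j = (i+j) + d by ring]
    rw [choose_cast (x := i+j) (y := d) hnz (by omega)]
  have gfi : ((i.factorial : ℕ) : K) ≠ 0 := fact_ne hnz i (by omega)
  have gfd : ((d.factorial : ℕ) : K) ≠ 0 := fact_ne hnz d (by omega)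
  have gfj : ((j.factorial : ℕ) : K) ≠ 0 := fact_ne hnz j (by omega)
  have gfij : (((i+j).factorial : ℕ) : K) ≠ 0 := fact_ne hnz (i+j) (by omega)
  have gfdj : (((d+j).factorial : ℕ) : K) ≠ 0 := fact_ne hnz (d+j) (by omega)
  have gfidj : (((i+d+j).factorial : ℕ) : K) ≠ 0 := fact_ne hnz (i+d+j) (by omega)
  have gs2 : ((d+j+1 : ℕ) : K) ≠ 0 := hnz _ (by omega) (by omega)
  have gs3 : ((i+j+1 : ℕ) : K) ≠ 0 := hnz _ (by omega) (by omega)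
  have gs4 : ((j+1 : ℕ) : K) ≠ 0 := hnz _ (by omega) (by omega)
  have hchoose3 : (((i+(j+1)).choose i : ℕ) : K) ≠ 0 := by
    rw [h3]
    exact mul_ne_zero (mul_ne_zero gs3 gfij)
      (inv_ne_zero (mul_ne_zero gfi (mul_ne_zero gs4 gfj)))
  have hchoose4 : (((i+j).choose i : ℕ) : K) ≠ 0 := by
    rw [h4]
    exact mul_ne_zero gfij (inv_ne_zero (mul_ne_zero gfi gfj))
  have hff := ff_alg (K := K)
    ((i+d+j+1 : ℕ) : K) ((d+j+1 : ℕ) : K) ((i+j+1 : ℕ) : K) ((j+1 : ℕ) : K)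
    ((i.factorial : ℕ) : K) ((d.factorial : ℕ) : K) ((j.factorial : ℕ) : K)
    (((i+j).factorial : ℕ) : K) (((d+j).factorial : ℕ) : K) (((i+d+j).factorial : ℕ) : K)
    ((((i+d)+(j+1)).choose i : ℕ) : K) ((((i+d)+j).choose i : ℕ) : K)
    (((i+(j+1)).choose i : ℕ) : K) (((i+j).choose i : ℕ) : K)
    ((((i+d)+(j+1)).choose (i+(j+1)) : ℕ) : K) ((((i+d)+j).choose (i+j) : ℕ) : K)
    h1 h2 h3 h4 h5 h6 gfi gfd gfj gfij gfdj gs2 gs3 gs4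
  exact div_alg _ _ _ _ _ _ _ _ _ _ _ hff hchoose3 hchoose4 gs2 gfdj
lemma final_prod (i m : ℕ) (him : i ≤ m)
    (hnz : ∀ t : ℕ, 0 < t → t ≤ m + m → ((t : ℕ) : K) ≠ 0) :
    ∀ j : ℕ, j ≤ m →
    (∏ t ∈ range (j+1), (((m+t).choose i : ℕ) : K) * ((((i+t).choose i : ℕ) : K))⁻¹) *
      (∏ t ∈ range j, (((m+t).choose i : ℕ) : K) * ((((i+t).choose i : ℕ) : K))⁻¹)
    = (((m+j).choose (i+j) : ℕ) : K) *
        ∏ k ∈ range j, (((m+k).choose (i+k) : ℕ) : K)^2 *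
          (((k+1 : ℕ) : K) * (((m+k-i+1 : ℕ) : K))⁻¹)^(2*(j-k)-1) := by
  obtain ⟨d, rfl⟩ : ∃ d, m = i + d := ⟨m - i, by omega⟩
  intro j
  induction j with
  | zero => simp
  | succ j IH =>
    intro hj1
    have hj : j ≤ i + d := by omega
    have IH' := IH hj
    have hsplit : ∀ k ∈ range j,
        (((i+d+k).choose (i+k) : ℕ) : K)^2 *
          (((k+1 : ℕ) : K) * (((i+d+k-i+1 : ℕ) : K))⁻¹)^(2*((j+1)-k)-1)
        = ((((i+d+k).choose (i+k) : ℕ) : K)^2 *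
            (((k+1 : ℕ) : K) * (((i+d+k-i+1 : ℕ) : K))⁻¹)^(2*(j-k)-1)) *
          ((((k+1 : ℕ) : K) * (((i+d+k-i+1 : ℕ) : K))⁻¹))^2 := by
      intro k hk
      have hkj : k < j := Finset.mem_range.mp hk
      rw [show 2*((j+1)-k)-1 = (2*(j-k)-1) + 2 by omega, pow_add]
      ring
    conv_rhs => rw [Finset.prod_range_succ]
    rw [Finset.prod_congr rfl hsplit]
    conv_rhs => rw [Finset.prod_mul_distrib]
    rw [Finset.prod_pow]
    have hQ : (∏ k ∈ range j, (((k+1 : ℕ) : K) * (((i+d+k-i+1 : ℕ) : K))⁻¹))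
        = ((j.factorial : ℕ) : K) * ((d.factorial : ℕ) : K) * ((((d+j).factorial : ℕ) : K))⁻¹ := by
      rw [Finset.prod_mul_distrib, Finset.prod_inv_distrib]
      have e1 : (∏ k ∈ range j, ((k+1 : ℕ) : K)) = ((j.factorial : ℕ) : K) := by
        have h0 := prod_shift_fact' (K := K) (B := (i+d)+(i+d)) (x := 0) j hnz (by omega)
        simp only [Nat.zero_add, Nat.factorial_zero] at h0
        rw [show (fun k => ((k + 1 : ℕ) : K)) = fun k => ((0 + 1 + k : ℕ) : K) by
          funext k; congr 1; omega]
        rw [h0]; simp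
      have e2 : (∏ k ∈ range j, ((i+d+k-i+1 : ℕ) : K)) = (((d+j).factorial : ℕ) : K) *
          (((d.factorial : ℕ) : K))⁻¹ := by
        rw [show (fun k => ((i+d+k-i+1 : ℕ) : K)) = fun k => ((d + 1 + k : ℕ) : K) by
          funext k; congr 1; omega]
        exact prod_shift_fact' j hnz (by omega)
      rw [e1, e2]
      have gfd : ((d.factorial : ℕ) : K) ≠ 0 := fact_ne hnz d (by omega)
      have gfdj : (((d+j).factorial : ℕ) : K) ≠ 0 := fact_ne hnz (d+j) (by omega)
      field_simp
    rw [hQ]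
    rw [Finset.prod_range_succ, Finset.prod_range_succ]
    rw [show 2*((j+1)-j)-1 = 1 by omega, pow_one]
    rw [show i+d+j-i+1 = d+j+1 by omega]
    have hstep := final_step (K := K) i d j (by omega) hnz
    rw [Finset.prod_range_succ] at IH'
    linear_combination
      (((((i+d)+(j+1)).choose i : ℕ) : K) * ((((i+(j+1)).choose i : ℕ) : K))⁻¹ *
        ((((i+d+j).choose i : ℕ) : K) * ((((i+j).choose i : ℕ) : K))⁻¹)) * IH' +
      ((((i+d+j).choose (i+j) : ℕ) : K) *
        (∏ k ∈ range j, (((i+d+k).choose (i+k) : ℕ) : K)^2 *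
          (((k+1 : ℕ) : K) * (((i+d+k-i+1 : ℕ) : K))⁻¹)^(2*(j-k)-1))) * hstep

end FieldStuff

/-- interleaving equivalence -/

def interleave (j : ℕ) : (Fin (j+1) ⊕ Fin j) ≃ Fin (2*j+1) where
  toFun := Sum.elim (fun t => ⟨2*(t:ℕ), by omega⟩) (fun t => ⟨2*(t:ℕ)+1, by omega⟩)
  invFun k := if h : (k:ℕ) % 2 = 0 then Sum.inl ⟨(k:ℕ)/2, by omega⟩ else Sum.inr ⟨(k:ℕ)/2, by omega⟩
  left_inv x := by
    rcases x with t | t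
    · simp only [Sum.elim_inl]
      have h : 2 * (t:ℕ) % 2 = 0 := by omega
      simp only [h, ↓reduceDIte]
      congr 1
      ext
      simp only []
      omega
    · simp only [Sum.elim_inr]
      have h : ¬ ((2 * (t:ℕ) + 1) % 2 = 0) := by omega
      simp only [h, ↓reduceDIte]
      congr 1
      ext
      simp only []
      omega
  right_inv k := by
    by_cases h : (k:ℕ) % 2 = 0
    · simp only []
      rw [dif_pos h]
      simp only [Sum.elim_inl]
      ext
      simp only []
      omega
    · simp only []
      rw [dif_neg h]
      simp only [Sum.elim_inr]
      ext
      simp only []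
      omega


end BaseCaseAux

theorem base_case_c (p : ℕ) (hp : p.Prime) (hodd : Odd p)
    (x : ℤ → ZMod p)
    (hx : ∀ i : ℤ, x i =
      if (p : ℤ) ≤ i ∧ i < 2 * (p : ℤ) then
        (if (i - (p : ℤ)).toNat % 2 = 0 then
          ((((p - 1) / 2).choose ((i - (p : ℤ)).toNat / 2) : ℕ) : ZMod p)
        else 0)
      else 0) :
    ∀ j i : ℕ, j ≤ (p - 1) / 2 → i ≤ (p - 1) / 2 →
      Matrix.det (Matrix.of fun a b : Fin (2 * j + 1) =>
          x (((a : ℕ) : ℤ) - ((b : ℕ) : ℤ) + ((p : ℤ) + 2 * (i : ℤ))))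
        = ((((p - 1) / 2 + j).choose (i + j) : ℕ) : ZMod p) *
            ∏ k ∈ Finset.range j,
              ((((p - 1) / 2 + k).choose (i + k) : ℕ) : ZMod p) ^ 2 *
                (((k + 1 : ℕ) : ZMod p) *
                    ((((p - 1) / 2 + k - i + 1 : ℕ) : ZMod p))⁻¹) ^ (2 * (j - k) - 1) := by
  intro j i hj hi
  set m : ℕ := (p - 1) / 2 with hm
  have hp2 : p = 2 * m + 1 := by
    obtain ⟨c, hc⟩ := hodd
    omega
  haveI : Fact p.Prime := ⟨hp⟩
  -- nonzero facts
  have hnz : ∀ t : ℕ, 0 < t → t ≤ m + m → ((t : ℕ) : ZMod p) ≠ 0 := by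
    intro t ht1 ht2 h
    rw [ZMod.natCast_eq_zero_iff] at h
    have := Nat.le_of_dvd ht1 h
    omega
  -- the two key values of x
  have xval : ∀ c : ℤ, x (2*c + p) = ((BaseCaseAux.bct m c : ℕ) : ZMod p) := by
    intro c
    rw [hx]
    rcases lt_trichotomy c 0 with hc | hc | hc
    · rw [if_neg (by omega), BaseCaseAux.bct_neg hc]
      simp
    · subst hc
      rw [if_pos (by omega)]
      norm_num [BaseCaseAux.bct]
    · rcases le_or_gt c m with hcm | hcm
      · rw [if_pos (by omega)]
        have h1 : (2*c + p - p).toNat = 2 * c.toNat := by omega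
        rw [h1]
        rw [if_pos (by omega)]
        rw [BaseCaseAux.bct_nonneg (by omega)]
        congr 2
        omega
      · rw [if_neg (by omega), BaseCaseAux.bct_nonneg (by omega)]
        rw [Nat.choose_eq_zero_of_lt (by omega)]
        simp
  have xodd : ∀ c : ℤ, x (2*c + 1 + p) = 0 := by
    intro c
    rw [hx]
    by_cases hc : (p:ℤ) ≤ 2*c + 1 + p ∧ 2*c + 1 + p < 2*p
    · rw [if_pos hc]
      rw [if_neg (by omega)]
    · rw [if_neg hc]
  -- the matrix as blocks
  have hdet : Matrix.det (Matrix.of fun a b : Fin (2 * j + 1) =>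
      x (((a : ℕ) : ℤ) - ((b : ℕ) : ℤ) + ((p : ℤ) + 2 * (i : ℤ))))
      = (BaseCaseAux.AM (ZMod p) m (j+1) i).det * (BaseCaseAux.AM (ZMod p) m j i).det := by
    rw [← Matrix.det_submatrix_equiv_self (BaseCaseAux.interleave j)]
    rw [← Matrix.det_fromBlocks_zero₂₁ (BaseCaseAux.AM (ZMod p) m (j+1) i) 0 (BaseCaseAux.AM (ZMod p) m j i)]
    congr 1
    ext ab cd
    rcases ab with a | a <;> rcases cd with b | b
    · show x _ = BaseCaseAux.AM (ZMod p) m (j+1) i a b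
      have harg : ((((BaseCaseAux.interleave j) (Sum.inl a) : Fin (2*j+1)) : ℕ) : ℤ)
          - ((((BaseCaseAux.interleave j) (Sum.inl b) : Fin (2*j+1)) : ℕ) : ℤ) + ((p : ℤ) + 2 * (i : ℤ))
          = 2*((i:ℤ) + (a:ℕ) - (b:ℕ)) + p := by
        show ((2*(a:ℕ) : ℕ) : ℤ) - ((2*(b:ℕ) : ℕ) : ℤ) + _ = _
        push_cast
        ring
      rw [harg, xval]
      rfl
    · show x _ = (0 : Matrix (Fin (j+1)) (Fin j) (ZMod p)) a b
      have harg : ((((BaseCaseAux.interleave j) (Sum.inl a) : Fin (2*j+1)) : ℕ) : ℤ)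
          - ((((BaseCaseAux.interleave j) (Sum.inr b) : Fin (2*j+1)) : ℕ) : ℤ) + ((p : ℤ) + 2 * (i : ℤ))
          = 2*((i:ℤ) + (a:ℕ) - (b:ℕ) - 1) + 1 + p := by
        show ((2*(a:ℕ) : ℕ) : ℤ) - ((2*(b:ℕ)+1 : ℕ) : ℤ) + _ = _
        push_cast
        ring
      rw [harg, xodd]
      rfl
    · show x _ = (0 : Matrix (Fin j) (Fin (j+1)) (ZMod p)) a b
      have harg : ((((BaseCaseAux.interleave j) (Sum.inr a) : Fin (2*j+1)) : ℕ) : ℤ)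
          - ((((BaseCaseAux.interleave j) (Sum.inl b) : Fin (2*j+1)) : ℕ) : ℤ) + ((p : ℤ) + 2 * (i : ℤ))
          = 2*((i:ℤ) + (a:ℕ) - (b:ℕ)) + 1 + p := by
        show ((2*(a:ℕ)+1 : ℕ) : ℤ) - ((2*(b:ℕ) : ℕ) : ℤ) + _ = _
        push_cast
        ring
      rw [harg, xodd]
      rfl
    · show x _ = BaseCaseAux.AM (ZMod p) m j i a b
      have harg : ((((BaseCaseAux.interleave j) (Sum.inr a) : Fin (2*j+1)) : ℕ) : ℤ)
          - ((((BaseCaseAux.interleave j) (Sum.inr b) : Fin (2*j+1)) : ℕ) : ℤ) + ((p : ℤ) + 2 * (i : ℤ))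
          = 2*((i:ℤ) + (a:ℕ) - (b:ℕ)) + p := by
        show ((2*(a:ℕ)+1 : ℕ) : ℤ) - ((2*(b:ℕ)+1 : ℕ) : ℤ) + _ = _
        push_cast
        ring
      rw [harg, xval]
      rfl
  rw [hdet]
  rw [BaseCaseAux.det_AM_val i m (j+1) hi (fun t h1 h2 => hnz t h1 (by omega)),
      BaseCaseAux.det_AM_val i m j hi (fun t h1 h2 => hnz t h1 (by omega))]
  exact BaseCaseAux.final_prod i m hi hnz j hj
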